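/- arXiv:1706.07403 — 2 statements merged into one kernel-verified Lean document; each statement's English description precedes it below -/
import Mathlib

section
/- If the weight vector w ∈ ℝ^n is adapted to (μ, ν), i.e. μ(Vor_S^w(i)) = λ_i for every i ∈ {1,…,n}, then T_S^w is a transport map from μ to ν whose cost is minimal among all transport maps from μ to ν, and any transport map from μ to ν achieving this minimal cost agrees with T_S^w μ-almost everywhere. -/
open MeasureTheory

/-- The additively weighted Voronoi cell of the site `s i` with weight vector `w`. -/
def vorCell {d n : ℕ} (s : Fin n → EuclideanSpace ℝ (Fin d)) (w : Fin n → ℝ) (i : Fin n) :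
    Set (EuclideanSpace ℝ (Fin d)) :=
  {x | ∀ j, ‖x - s i‖ - w i ≤ ‖x - s j‖ - w j}

/-- If `w` is adapted to `(μ, ν)`, i.e. `μ(Vor_S^w(i)) = λ i` for all `i`, then the Voronoi map
`T_S^w` (given by a measurable selection `Tsel` of Voronoi cells, `T_S^w = s ∘ Tsel`) is a
transport map from `μ` to `ν` of minimal cost, and any transport map from `μ` to `ν` achieving
the minimal cost agrees with it `μ`-almost everywhere. -/
theorem adapted_voronoi_map_optimal {d n : ℕ}
    (μ : Measure (EuclideanSpace ℝ (Fin d))) [IsProbabilityMeasure μ]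
    (hac : μ ≪ volume)
    (hint : Integrable (fun x => ‖x‖) μ)
    (s : Fin n → EuclideanSpace ℝ (Fin d)) (hs : Function.Injective s)
    (lam : Fin n → ℝ) (hlam : ∀ i, 0 < lam i) (hlamSum : ∑ i, lam i = 1)
    (ν : Measure (EuclideanSpace ℝ (Fin d)))
    (hν : ν = ∑ i, ENNReal.ofReal (lam i) • Measure.dirac (s i))
    (w : Fin n → ℝ)
    (hadapted : ∀ i, μ (vorCell s w i) = ENNReal.ofReal (lam i))
    (Tsel : EuclideanSpace ℝ (Fin d) → Fin n) (hTselMeas : Measurable Tsel)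
    (hTsel : ∀ x, x ∈ vorCell s w (Tsel x)) :
    Measure.map (fun x => s (Tsel x)) μ = ν ∧
    (∀ T : EuclideanSpace ℝ (Fin d) → EuclideanSpace ℝ (Fin d),
      Measurable T → (∀ x, T x ∈ Set.range s) → Measure.map T μ = ν →
      ∫ x, ‖x - s (Tsel x)‖ ∂μ ≤ ∫ x, ‖x - T x‖ ∂μ) ∧
    (∀ T : EuclideanSpace ℝ (Fin d) → EuclideanSpace ℝ (Fin d),
      Measurable T → (∀ x, T x ∈ Set.range s) → Measure.map T μ = ν →
      ∫ x, ‖x - T x‖ ∂μ = ∫ x, ‖x - s (Tsel x)‖ ∂μ →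
      ∀ᵐ x ∂μ, T x = s (Tsel x)) := by
  classical
  have hsMeas : Measurable s := measurable_of_countable s
  have hmapMeas : Measurable (fun x : EuclideanSpace ℝ (Fin d) => s (Tsel x)) := hsMeas.comp hTselMeas
  -- the auxiliary weight function g
  set g : EuclideanSpace ℝ (Fin d) → ℝ := fun y => ∑ i, if y = s i then w i else 0 with hgdef
  have hgMeas : Measurable g := by
    apply Finset.measurable_sum
    intro i _
    exact Measurable.ite (by simp [Set.setOf_eq_eq_singleton, measurableSet_singleton])
      measurable_const measurable_const
  have hgs : ∀ i, g (s i) = w i := by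
    intro i
    simp only [hgdef]
    rw [Finset.sum_eq_single i]
    · simp
    · intro j _ hj
      rw [if_neg]
      intro h
      exact hj (hs h).symm
    · simp
  have hgbound : ∀ y, |g y| ≤ ∑ i, |w i| := by
    intro y
    refine (Finset.abs_sum_le_sum_abs _ _).trans (Finset.sum_le_sum fun i _ => ?_)
    split <;> simp [abs_nonneg]
  -- integrability of cost functions
  have hIntCost : ∀ T : EuclideanSpace ℝ (Fin d) → EuclideanSpace ℝ (Fin d), Measurable T → (∀ x, T x ∈ Set.range s) →
      Integrable (fun x => ‖x - T x‖) μ := by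
    intro T hT hr
    refine Integrable.mono' (hint.add (integrable_const (∑ i, ‖s i‖)))
      ((measurable_id.sub hT).norm).aestronglyMeasurable (ae_of_all _ fun x => ?_)
    rw [norm_norm]
    calc ‖x - T x‖ ≤ ‖x‖ + ‖T x‖ := norm_sub_le _ _
      _ ≤ ‖x‖ + ∑ i, ‖s i‖ := by
          obtain ⟨j, hj⟩ := hr x
          rw [← hj]
          exact add_le_add le_rfl (Finset.single_le_sum (f := fun i => ‖s i‖) (fun i _ => norm_nonneg _)
            (Finset.mem_univ j))
  have hIntG : ∀ T : EuclideanSpace ℝ (Fin d) → EuclideanSpace ℝ (Fin d), Measurable T → Integrable (fun x => g (T x)) μ := by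
    intro T hT
    refine Integrable.mono' (integrable_const (∑ i, |w i|))
      ((hgMeas.comp hT).aestronglyMeasurable) (ae_of_all _ fun x => ?_)
    simpa [Real.norm_eq_abs] using hgbound (T x)
  -- integral of g against ν
  have hIntGν : ∫ y, g y ∂ν = ∑ i, lam i * w i := by
    rw [hν, integral_finset_sum_measure]
    · refine Finset.sum_congr rfl fun i _ => ?_
      rw [integral_smul_measure, integral_dirac, hgs, ENNReal.toReal_ofReal (hlam i).le,
        smul_eq_mul]
    · intro i _
      refine Integrable.smul_measure ?_ ENNReal.ofReal_ne_top
      refine Integrable.mono' (integrable_const (∑ i, |w i|))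
        (hgMeas.aestronglyMeasurable) (ae_of_all _ fun x => ?_)
      simpa [Real.norm_eq_abs] using hgbound x
  have hGmap : ∀ T : EuclideanSpace ℝ (Fin d) → EuclideanSpace ℝ (Fin d), Measurable T → Measure.map T μ = ν →
      ∫ x, g (T x) ∂μ = ∑ i, lam i * w i := by
    intro T hT hmap
    rw [← integral_map hT.aemeasurable hgMeas.aestronglyMeasurable, hmap, hIntGν]
  -- the cells B i = Tsel⁻¹ {i}
  set B : Fin n → Set (EuclideanSpace ℝ (Fin d)) := fun i => Tsel ⁻¹' {i} with hBdef
  have hBmeas : ∀ i, MeasurableSet (B i) := fun i => hTselMeas (measurableSet_singleton i)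
  have hBdisj : Pairwise (Function.onFun Disjoint B) := by
    intro i j hij
    simp only [Function.onFun, hBdef, Set.disjoint_left]
    intro x hx hx'
    exact hij (hx.symm.trans hx')
  have hBcover : ⋃ i, B i = Set.univ := by
    ext x
    simp only [Set.mem_iUnion, Set.mem_univ, iff_true, hBdef, Set.mem_preimage,
      Set.mem_singleton_iff]
    exact ⟨Tsel x, rfl⟩
  have hBsub : ∀ i, B i ⊆ vorCell s w i := by
    intro i x hx
    have h' : Tsel x = i := hx
    have := hTsel x
    rwa [h'] at this
  have hμB : ∀ i, μ (B i) = ENNReal.ofReal (lam i) := by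
    have hle : ∀ i, μ (B i) ≤ ENNReal.ofReal (lam i) := fun i =>
      (measure_mono (hBsub i)).trans_eq (hadapted i)
    have hsum : ∑ i, μ (B i) = 1 := by
      rw [← tsum_fintype (L := .unconditional _), ← measure_iUnion hBdisj hBmeas, hBcover, measure_univ]
    have hbsum : ∑ i, (μ (B i)).toReal = 1 := by
      rw [← ENNReal.toReal_sum (fun i _ => measure_ne_top μ _), hsum, ENNReal.toReal_one]
    have hble : ∀ i, (μ (B i)).toReal ≤ lam i := by
      intro i
      have := ENNReal.toReal_mono ENNReal.ofReal_ne_top (hle i)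
      rwa [ENNReal.toReal_ofReal (hlam i).le] at this
    have heq : ∀ i ∈ Finset.univ, (μ (B i)).toReal = lam i := by
      refine (Finset.sum_eq_sum_iff_of_le (fun i _ => hble i)).1 ?_
      rw [hbsum, hlamSum]
    intro i
    rw [← ENNReal.ofReal_toReal (measure_ne_top μ (B i)), heq i (Finset.mem_univ i)]
  -- Part 1: the Voronoi map is a transport map
  have part1 : Measure.map (fun x => s (Tsel x)) μ = ν := by
    rw [hν]
    ext A hA
    rw [Measure.map_apply hmapMeas hA, Measure.finset_sum_apply]
    have hpre : (fun x : EuclideanSpace ℝ (Fin d) => s (Tsel x)) ⁻¹' A = ⋃ i, if s i ∈ A then B i else ∅ := by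
      ext x
      simp only [Set.mem_preimage, Set.mem_iUnion]
      constructor
      · intro hx
        exact ⟨Tsel x, by rw [if_pos hx]; exact rfl⟩
      · rintro ⟨i, hi⟩
        by_cases h : s i ∈ A
        · rw [if_pos h] at hi
          have : Tsel x = i := hi
          rw [this]; exact h
        · rw [if_neg h] at hi; exact absurd hi (Set.notMem_empty x)
    rw [hpre, measure_iUnion, tsum_fintype]
    · refine Finset.sum_congr rfl fun i _ => ?_
      rw [Measure.smul_apply, Measure.dirac_apply' _ hA, smul_eq_mul]
      by_cases h : s i ∈ A
      · rw [if_pos h, hμB i, Set.indicator_of_mem h, Pi.one_apply, mul_one]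
      · rw [if_neg h, Set.indicator_of_notMem h, mul_zero, measure_empty]
    · intro i j hij
      refine (hBdisj hij).mono ?_ ?_ <;> simp only [] <;> split <;>
        simp [Set.empty_subset, subset_rfl]
    · intro i
      split
      · exact hBmeas i
      · exact MeasurableSet.empty
  -- pointwise inequality
  have hpt : ∀ (T : EuclideanSpace ℝ (Fin d) → EuclideanSpace ℝ (Fin d)), (∀ x, T x ∈ Set.range s) → ∀ x,
      ‖x - s (Tsel x)‖ - g (s (Tsel x)) ≤ ‖x - T x‖ - g (T x) := by
    intro T hr x
    obtain ⟨j, hj⟩ := hr x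
    rw [← hj, hgs, hgs]
    exact hTsel x j
  have hcost : ∀ (T : EuclideanSpace ℝ (Fin d) → EuclideanSpace ℝ (Fin d)), Measurable T → (∀ x, T x ∈ Set.range s) →
      Measure.map T μ = ν →
      ∫ x, ‖x - s (Tsel x)‖ ∂μ ≤ ∫ x, ‖x - T x‖ ∂μ := by
    intro T hTm hTr hTmap
    have h1 : ∫ x, g (T x) ∂μ = ∑ i, lam i * w i := hGmap T hTm hTmap
    have h2 : ∫ x, g (s (Tsel x)) ∂μ = ∑ i, lam i * w i :=
      hGmap _ hmapMeas part1
    have hIA : Integrable (fun x => ‖x - T x‖ - g (T x)) μ :=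
      (hIntCost T hTm hTr).sub (hIntG T hTm)
    have hIB : Integrable (fun x => ‖x - s (Tsel x)‖ - g (s (Tsel x))) μ :=
      (hIntCost _ hmapMeas (fun x => ⟨Tsel x, rfl⟩)).sub (hIntG _ hmapMeas)
    have hmono : ∫ x, (‖x - s (Tsel x)‖ - g (s (Tsel x))) ∂μ ≤
        ∫ x, (‖x - T x‖ - g (T x)) ∂μ := by
      refine integral_mono hIB hIA ?_
      intro x
      exact hpt T hTr x
    rw [integral_sub (hIntCost _ hmapMeas (fun x => ⟨Tsel x, rfl⟩)) (hIntG _ hmapMeas),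
      integral_sub (hIntCost T hTm hTr) (hIntG T hTm), h1, h2] at hmono
    linarith
  refine ⟨part1, hcost, ?_⟩
  -- Part 3: uniqueness
  intro T hTm hTr hTmap hTeq
  -- cells measurable
  have hcellMeas : ∀ i, MeasurableSet (vorCell s w i) := by
    intro i
    have heq : vorCell s w i
        = ⋂ j, {x : EuclideanSpace ℝ (Fin d) | ‖x - s i‖ - w i ≤ ‖x - s j‖ - w j} := by
      ext x
      simp [vorCell, Set.mem_iInter]
    have : IsClosed (vorCell s w i) := by
      rw [heq]
      refine isClosed_iInter fun j => isClosed_le ?_ ?_ <;>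
        exact ((continuous_id.sub continuous_const).norm.sub continuous_const)
    exact this.measurableSet
  -- overlaps are null
  have hovl : ∀ i j, i ≠ j → μ (vorCell s w i ∩ vorCell s w j) = 0 := by
    intro i j hij
    set A := vorCell s w i
    set C := vorCell s w j
    have hsumcells : ∑ k, μ (vorCell s w k) = 1 := by
      simp only [hadapted]
      rw [← ENNReal.ofReal_sum_of_nonneg (fun k _ => (hlam k).le), hlamSum,
        ENNReal.ofReal_one]
    have hsplit : ∑ k, μ (vorCell s w k)
        = μ A + μ C + ∑ k ∈ (Finset.univ.erase i).erase j, μ (vorCell s w k) := by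
      rw [← Finset.add_sum_erase _ _ (Finset.mem_univ i),
        ← Finset.add_sum_erase _ _ (Finset.mem_erase.2 ⟨hij.symm, Finset.mem_univ j⟩)]
      ring
    have hcoverle : (1 : ENNReal) ≤ μ (A ∪ C)
        + ∑ k ∈ (Finset.univ.erase i).erase j, μ (vorCell s w k) := by
      have hsubset : Set.univ ⊆ (A ∪ C) ∪ ⋃ k ∈ (Finset.univ.erase i).erase j,
          vorCell s w k := by
        intro x _
        rcases eq_or_ne (Tsel x) i with h | h
        · refine Or.inl (Or.inl ?_)
          have := hTsel x
          rwa [h] at this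
        rcases eq_or_ne (Tsel x) j with h' | h'
        · refine Or.inl (Or.inr ?_)
          have := hTsel x
          rwa [h'] at this
        · exact Or.inr (Set.mem_biUnion (Finset.mem_erase.2 ⟨h',
            Finset.mem_erase.2 ⟨h, Finset.mem_univ _⟩⟩) (hTsel x))
      calc (1 : ENNReal) = μ Set.univ := (measure_univ).symm
        _ ≤ μ ((A ∪ C) ∪ ⋃ k ∈ (Finset.univ.erase i).erase j, vorCell s w k) :=
            measure_mono hsubset
        _ ≤ μ (A ∪ C) + μ (⋃ k ∈ (Finset.univ.erase i).erase j, vorCell s w k) :=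
            measure_union_le _ _
        _ ≤ _ := add_le_add le_rfl (measure_biUnion_finset_le _ _)
    have hinterunion : μ (A ∪ C) + μ (A ∩ C) = μ A + μ C :=
      measure_union_add_inter A (hcellMeas j)
    -- combine
    have hkey : μ (A ∪ C) + μ (A ∩ C)
        + ∑ k ∈ (Finset.univ.erase i).erase j, μ (vorCell s w k) = 1 := by
      rw [hinterunion, ← hsplit, hsumcells]
    by_contra hne
    have hpos : 0 < μ (A ∩ C) := pos_iff_ne_zero.2 hne
    have hlt : μ (A ∪ C) + ∑ k ∈ (Finset.univ.erase i).erase j, μ (vorCell s w k)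
        < 1 := by
      have hfin1 : μ (A ∪ C) ≠ ⊤ := measure_ne_top μ _
      have hfin2 : ∑ k ∈ (Finset.univ.erase i).erase j, μ (vorCell s w k) ≠ ⊤ := by
        refine (lt_of_le_of_lt ?_ (lt_top_iff_ne_top.2 ENNReal.one_ne_top)).ne
        calc _ ≤ ∑ k, μ (vorCell s w k) :=
              Finset.sum_le_sum_of_subset (Finset.erase_subset _ _ |>.trans
                (Finset.erase_subset _ _))
          _ = 1 := hsumcells
      calc μ (A ∪ C) + ∑ k ∈ (Finset.univ.erase i).erase j, μ (vorCell s w k)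
          < μ (A ∪ C) + ∑ k ∈ (Finset.univ.erase i).erase j, μ (vorCell s w k)
            + μ (A ∩ C) := by
            exact ENNReal.lt_add_right (by
              exact ENNReal.add_ne_top.2 ⟨hfin1, hfin2⟩) hne
        _ = 1 := by rw [← hkey]; ring
    exact absurd hcoverle (not_le.2 hlt)
  -- the nonnegative integrand
  have h1 : ∫ x, g (T x) ∂μ = ∑ i, lam i * w i := hGmap T hTm hTmap
  have h2 : ∫ x, g (s (Tsel x)) ∂μ = ∑ i, lam i * w i := hGmap _ hmapMeas part1
  have hIA : Integrable (fun x => ‖x - T x‖ - g (T x)) μ :=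
    (hIntCost T hTm hTr).sub (hIntG T hTm)
  have hIB : Integrable (fun x => ‖x - s (Tsel x)‖ - g (s (Tsel x))) μ :=
    (hIntCost _ hmapMeas (fun x => ⟨Tsel x, rfl⟩)).sub (hIntG _ hmapMeas)
  have hIntF : Integrable (fun x => (‖x - T x‖ - g (T x))
      - (‖x - s (Tsel x)‖ - g (s (Tsel x)))) μ := hIA.sub hIB
  have hFnonneg : 0 ≤ fun x => (‖x - T x‖ - g (T x))
      - (‖x - s (Tsel x)‖ - g (s (Tsel x))) := by
    intro x
    have := hpt T hTr x
    simp only [Pi.zero_apply]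
    linarith
  have hFint : ∫ x, ((‖x - T x‖ - g (T x))
      - (‖x - s (Tsel x)‖ - g (s (Tsel x)))) ∂μ = 0 := by
    rw [integral_sub hIA hIB,
      integral_sub (hIntCost T hTm hTr) (hIntG T hTm),
      integral_sub (hIntCost _ hmapMeas (fun x => ⟨Tsel x, rfl⟩)) (hIntG _ hmapMeas),
      h1, h2, hTeq]
    ring
  have hae0 : ∀ᵐ x ∂μ, (‖x - T x‖ - g (T x))
      - (‖x - s (Tsel x)‖ - g (s (Tsel x))) = 0 := by
    have := (integral_eq_zero_iff_of_nonneg hFnonneg hIntF).1 hFint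
    filter_upwards [this] with x hx
    exact hx
  have hae2 : ∀ᵐ x ∂μ, ∀ i j, i ≠ j → x ∉ vorCell s w i ∩ vorCell s w j := by
    rw [ae_all_iff]
    intro i
    rw [ae_all_iff]
    intro j
    by_cases hij : i = j
    · exact ae_of_all _ fun x h => absurd hij h
    · filter_upwards [(measure_eq_zero_iff_ae_notMem (μ := μ)).1 (hovl i j hij)] with x hx
      exact fun _ => hx
  filter_upwards [hae0, hae2] with x hF hx
  obtain ⟨j, hj⟩ := hTr x
  rw [← hj] at hF ⊢
  rw [hgs, hgs] at hF
  by_contra hne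
  have hjne : j ≠ Tsel x := fun h => hne (by rw [h])
  have hxj : x ∈ vorCell s w j := by
    intro k
    have h1 : ‖x - s j‖ - w j = ‖x - s (Tsel x)‖ - w (Tsel x) := by linarith
    rw [h1]
    exact hTsel x k
  exact hx j (Tsel x) hjne ⟨hxj, hTsel x⟩
end

section
/- If w* ∈ ℝ^n is a minimizer of the function Φ(w) := Σ_{i=1}^n ( −λ_i w_i − ∫_{Vor_S^w(i)} (‖x − s^i‖ − w_i) dμ(x) ), then w* is adapted to (μ, ν), i.e. μ(Vor_S^{w*}(i)) = λ_i for every i ∈ {1,…,n}. -/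
open MeasureTheory

/-- The objective function `Φ(w) = Σ_i ( -λ_i w_i - ∫_{Vor_S^w(i)} (‖x - s^i‖ - w_i) dμ(x) )`. -/
noncomputable def Phi {d n : ℕ} (μ : Measure (EuclideanSpace ℝ (Fin d)))
    (s : Fin n → EuclideanSpace ℝ (Fin d)) (lam : Fin n → ℝ) (w : Fin n → ℝ) : ℝ :=
  ∑ i, (-(lam i) * w i - ∫ x in vorCell s w i, (‖x - s i‖ - w i) ∂μ)

section
set_option linter.unusedSectionVars false
set_option linter.unnecessarySeqFocus false
set_option maxHeartbeats 1000000

namespace VorAux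

variable {d n : ℕ} [Nonempty (Fin n)]

/-- `min_j (‖x - s j‖ - w j)`. -/
noncomputable def mfun (s : Fin n → EuclideanSpace ℝ (Fin d)) (w : Fin n → ℝ)
    (x : EuclideanSpace ℝ (Fin d)) : ℝ :=
  Finset.univ.inf' Finset.univ_nonempty (fun j => ‖x - s j‖ - w j)

variable {s : Fin n → EuclideanSpace ℝ (Fin d)} {w : Fin n → ℝ} {x : EuclideanSpace ℝ (Fin d)}

lemma mfun_le (j : Fin n) : mfun s w x ≤ ‖x - s j‖ - w j :=
  Finset.inf'_le _ (Finset.mem_univ j)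

lemma le_mfun {c : ℝ} (h : ∀ j, c ≤ ‖x - s j‖ - w j) : c ≤ mfun s w x :=
  Finset.le_inf' _ _ (fun j _ => h j)

lemma exists_mem_cell (s : Fin n → EuclideanSpace ℝ (Fin d)) (w : Fin n → ℝ)
    (x : EuclideanSpace ℝ (Fin d)) : ∃ j, x ∈ vorCell s w j := by
  obtain ⟨j, -, hj⟩ := Finset.exists_mem_eq_inf' (Finset.univ_nonempty (α := Fin n))
    (fun j => ‖x - s j‖ - w j)
  refine ⟨j, fun k => ?_⟩
  have : mfun s w x = ‖x - s j‖ - w j := hj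
  exact this ▸ mfun_le k

lemma mfun_eq_of_mem {i : Fin n} (h : x ∈ vorCell s w i) :
    mfun s w x = ‖x - s i‖ - w i :=
  le_antisymm (mfun_le i) (le_mfun (fun j => h j))

lemma measurableSet_cell (s : Fin n → EuclideanSpace ℝ (Fin d)) (w : Fin n → ℝ) (i : Fin n) :
    MeasurableSet (vorCell s w i) := by
  have : vorCell s w i = ⋂ j, {x | ‖x - s i‖ - w i ≤ ‖x - s j‖ - w j} := by
    ext x; simp [vorCell, Set.mem_iInter]
  rw [this]
  exact MeasurableSet.iInter fun j => measurableSet_le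
    (((measurable_id.sub measurable_const).norm).sub measurable_const)
    (((measurable_id.sub measurable_const).norm).sub measurable_const)

lemma continuous_mfun : Continuous (mfun s w) := by
  apply Continuous.finset_inf'_apply
  exact fun j _ => ((continuous_id.sub continuous_const).norm).sub continuous_const

variable (μ : Measure (EuclideanSpace ℝ (Fin d))) [IsProbabilityMeasure μ]

lemma integrable_norm_sub (hint : Integrable (fun x => ‖x‖) μ)
    (p : EuclideanSpace ℝ (Fin d)) : Integrable (fun x => ‖x - p‖) μ := by
  refine (hint.add (integrable_const ‖p‖)).mono
    ((continuous_id.sub continuous_const).norm).aestronglyMeasurable ?_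
  filter_upwards with x
  simp only [norm_norm]
  calc ‖x - p‖ ≤ ‖x‖ + ‖p‖ := norm_sub_le _ _
    _ ≤ ‖‖x‖ + ‖p‖‖ := le_abs_self _

lemma integrable_f (hint : Integrable (fun x => ‖x‖) μ) (i : Fin n) :
    Integrable (fun x => ‖x - s i‖ - w i) μ :=
  (integrable_norm_sub μ hint (s i)).sub (integrable_const _)

lemma integrable_mfun (hint : Integrable (fun x => ‖x‖) μ) :
    Integrable (mfun s w) μ := by
  have hg : Integrable (fun x => ∑ j, (‖x - s j‖ + |w j|)) μ :=
    integrable_finset_sum _ fun j _ =>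
      (integrable_norm_sub μ hint (s j)).add (integrable_const _)
  refine hg.mono continuous_mfun.aestronglyMeasurable ?_
  filter_upwards with x
  obtain ⟨j, hj⟩ := exists_mem_cell s w x
  have h1 : mfun s w x = ‖x - s j‖ - w j := mfun_eq_of_mem hj
  have h2 : |mfun s w x| ≤ ‖x - s j‖ + |w j| := by
    rw [h1, abs_le]
    constructor <;> nlinarith [abs_nonneg (w j), le_abs_self (w j), neg_abs_le (w j),
      norm_nonneg (x - s j)]
  calc ‖mfun s w x‖ ≤ ‖x - s j‖ + |w j| := h2
    _ ≤ ∑ k, (‖x - s k‖ + |w k|) := by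
        refine Finset.single_le_sum (f := fun k => ‖x - s k‖ + |w k|) ?_ (Finset.mem_univ j)
        intro k _; positivity
    _ ≤ ‖∑ k, (‖x - s k‖ + |w k|)‖ := le_abs_self _

variable (μ : Measure (EuclideanSpace ℝ (Fin d))) [IsProbabilityMeasure μ]

variable (s) (w)

lemma cell_shift (c : ℝ) : ∀ i, vorCell s (fun j => w j + c) i = vorCell s w i := by
  intro i; ext x
  constructor <;> intro h j <;> have := h j <;> simp only [vorCell, Set.mem_setOf_eq] at * <;>
    linarith

lemma Phi_shift (lam : Fin n → ℝ) (hint : Integrable (fun x => ‖x‖) μ) (c : ℝ) :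
    Phi μ s lam (fun j => w j + c)
      = Phi μ s lam w + c * ((∑ i, (μ (vorCell s w i)).toReal) - ∑ i, lam i) := by
  have hterm : ∀ i : Fin n,
      (-(lam i) * (w i + c) - ∫ x in vorCell s (fun j => w j + c) i, (‖x - s i‖ - (w i + c)) ∂μ)
      = (-(lam i) * w i - ∫ x in vorCell s w i, (‖x - s i‖ - w i) ∂μ)
        + c * ((μ (vorCell s w i)).toReal - lam i) := by
    intro i
    rw [cell_shift s w c i]
    have h1 : ∫ x in vorCell s w i, (‖x - s i‖ - (w i + c)) ∂μ
        = (∫ x in vorCell s w i, (‖x - s i‖ - w i) ∂μ) - (μ (vorCell s w i)).toReal * c := by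
      have heq : (fun x : EuclideanSpace ℝ (Fin d) => ‖x - s i‖ - (w i + c))
          = fun x => (‖x - s i‖ - w i) - c := by funext x; ring
      rw [heq, integral_sub ((integrable_f μ hint i).integrableOn)
        (integrableOn_const (measure_ne_top _ _))]
      rw [setIntegral_const, smul_eq_mul, measureReal_def]
    rw [h1]; ring
  unfold Phi
  have hsplit : ∑ i : Fin n, ((μ (vorCell s w i)).toReal - lam i)
      = ∑ i, (μ (vorCell s w i)).toReal - ∑ i, lam i := Finset.sum_sub_distrib _ _
  rw [Finset.sum_congr rfl (fun i _ => hterm i), Finset.sum_add_distrib, ← Finset.mul_sum, hsplit]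

variable {s w}

lemma sum_measure_real (lam : Fin n → ℝ) (hint : Integrable (fun x => ‖x‖) μ)
    (hlamSum : ∑ i, lam i = 1)
    (wstar : Fin n → ℝ) (hmin : ∀ w : Fin n → ℝ, Phi μ s lam wstar ≤ Phi μ s lam w)
    (w : Fin n → ℝ) : ∑ i, (μ (vorCell s w i)).toReal = 1 := by
  by_contra hne
  set a : ℝ := (∑ i, (μ (vorCell s w i)).toReal) - ∑ i, lam i with ha
  have ha0 : a ≠ 0 := by rw [ha, hlamSum]; intro h; apply hne; linarith
  have := hmin (fun j => w j + (Phi μ s lam wstar - Phi μ s lam w - 1) / a)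
  rw [Phi_shift s w μ lam hint] at this
  rw [← ha, div_mul_cancel₀ _ ha0] at this
  linarith

lemma sum_measure (lam : Fin n → ℝ) (hint : Integrable (fun x => ‖x‖) μ)
    (hlamSum : ∑ i, lam i = 1)
    (wstar : Fin n → ℝ) (hmin : ∀ w : Fin n → ℝ, Phi μ s lam wstar ≤ Phi μ s lam w)
    (w : Fin n → ℝ) : ∑ i, μ (vorCell s w i) = 1 := by
  have h := sum_measure_real μ lam hint hlamSum wstar hmin w
  have : ∑ i, μ (vorCell s w i) = ENNReal.ofReal (∑ i, (μ (vorCell s w i)).toReal) := by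
    rw [ENNReal.ofReal_sum_of_nonneg (fun i _ => ENNReal.toReal_nonneg)]
    exact Finset.sum_congr rfl fun i _ => (ENNReal.ofReal_toReal (measure_ne_top μ _)).symm
  rw [this, h, ENNReal.ofReal_one]


lemma inter_null (lam : Fin n → ℝ) (hint : Integrable (fun x => ‖x‖) μ)
    (hlamSum : ∑ i, lam i = 1)
    (wstar : Fin n → ℝ) (hmin : ∀ w : Fin n → ℝ, Phi μ s lam wstar ≤ Phi μ s lam w)
    (w : Fin n → ℝ) {i j : Fin n} (hij : i ≠ j) :
    μ (vorCell s w i ∩ vorCell s w j) = 0 := by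
  set T := vorCell s w i ∩ vorCell s w j with hT
  have hTj : T ⊆ vorCell s w j := Set.inter_subset_right
  have hsub : (Set.univ : Set (EuclideanSpace ℝ (Fin d)))
      ⊆ (vorCell s w j \ T) ∪ ⋃ k ∈ Finset.univ.erase j, vorCell s w k := by
    intro x _
    obtain ⟨k, hk⟩ := exists_mem_cell s w x
    by_cases hkj : k = j
    · by_cases hxT : x ∈ T
      · exact Or.inr (Set.mem_biUnion (Finset.mem_erase.mpr ⟨hij, Finset.mem_univ i⟩) hxT.1)
      · exact Or.inl ⟨hkj ▸ hk, hxT⟩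
    · exact Or.inr (Set.mem_biUnion (Finset.mem_erase.mpr ⟨hkj, Finset.mem_univ k⟩) hk)
  have h1 : (1 : ENNReal) ≤ μ (vorCell s w j \ T) + ∑ k ∈ Finset.univ.erase j, μ (vorCell s w k) := by
    calc (1 : ENNReal) = μ Set.univ := (measure_univ).symm
      _ ≤ μ ((vorCell s w j \ T) ∪ ⋃ k ∈ Finset.univ.erase j, vorCell s w k) := measure_mono hsub
      _ ≤ μ (vorCell s w j \ T) + μ (⋃ k ∈ Finset.univ.erase j, vorCell s w k) := measure_union_le _ _
      _ ≤ _ := by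
          gcongr
          exact measure_biUnion_finset_le _ _
  have hdiff : μ (vorCell s w j \ T) = μ (vorCell s w j) - μ T :=
    measure_diff hTj ((measurableSet_cell s w i).inter (measurableSet_cell s w j)).nullMeasurableSet
      (measure_ne_top μ T)
  have hsum : μ (vorCell s w j) + ∑ k ∈ Finset.univ.erase j, μ (vorCell s w k) = 1 := by
    rw [← sum_measure μ lam hint hlamSum wstar hmin w]
    exact Finset.add_sum_erase _ (fun k => μ (vorCell s w k)) (Finset.mem_univ j)
  have hTle : μ T ≤ μ (vorCell s w j) := measure_mono hTj
  have h2 : (1 : ENNReal) + μ T ≤ 1 := by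
    calc (1 : ENNReal) + μ T
        ≤ (μ (vorCell s w j \ T) + ∑ k ∈ Finset.univ.erase j, μ (vorCell s w k)) + μ T :=
          add_le_add_left h1 _
      _ = ((μ (vorCell s w j) - μ T) + μ T) + ∑ k ∈ Finset.univ.erase j, μ (vorCell s w k) := by
          rw [hdiff]; ring
      _ = μ (vorCell s w j) + ∑ k ∈ Finset.univ.erase j, μ (vorCell s w k) := by
          rw [tsub_add_cancel_of_le hTle]
      _ = 1 := hsum
  have := (ENNReal.add_le_add_iff_left (by norm_num : (1:ENNReal) ≠ ⊤)).mp
    (by simpa using h2 : (1:ENNReal) + μ T ≤ 1 + 0)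
  exact le_antisymm this zero_le

lemma ae_unique (lam : Fin n → ℝ) (hint : Integrable (fun x => ‖x‖) μ)
    (hlamSum : ∑ i, lam i = 1)
    (wstar : Fin n → ℝ) (hmin : ∀ w : Fin n → ℝ, Phi μ s lam wstar ≤ Phi μ s lam w)
    (w : Fin n → ℝ) :
    ∀ᵐ x ∂μ, ∀ i j : Fin n, x ∈ vorCell s w i → x ∈ vorCell s w j → i = j := by
  have hnull : μ (⋃ (p : Fin n × Fin n) (_ : p.1 ≠ p.2), vorCell s w p.1 ∩ vorCell s w p.2) = 0 := by
    refine measure_iUnion_null fun p => ?_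
    rcases eq_or_ne p.1 p.2 with h | h
    · simp [h]
    · simpa [h] using inter_null μ lam hint hlamSum wstar hmin w h
  filter_upwards [measure_eq_zero_iff_ae_notMem.mp hnull] with x hx i j hi hj
  by_contra hij
  exact hx (Set.mem_iUnion.mpr ⟨(i, j), Set.mem_iUnion.mpr ⟨hij, hi, hj⟩⟩)


lemma Phi_eq (lam : Fin n → ℝ) (hint : Integrable (fun x => ‖x‖) μ)
    (hlamSum : ∑ i, lam i = 1)
    (wstar : Fin n → ℝ) (hmin : ∀ w : Fin n → ℝ, Phi μ s lam wstar ≤ Phi μ s lam w)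
    (w : Fin n → ℝ) :
    Phi μ s lam w = -(∑ i, lam i * w i) - ∫ x, mfun s w x ∂μ := by
  have hterm : ∀ i : Fin n, ∫ x in vorCell s w i, (‖x - s i‖ - w i) ∂μ
      = ∫ x, (vorCell s w i).indicator (mfun s w) x ∂μ := by
    intro i
    rw [setIntegral_congr_fun (measurableSet_cell s w i)
      (fun x hx => (mfun_eq_of_mem hx).symm), integral_indicator (measurableSet_cell s w i)]
  have hintm : Integrable (mfun s w) μ := integrable_mfun μ hint
  have hsum2 : ∑ i : Fin n, ∫ x, (vorCell s w i).indicator (mfun s w) x ∂μ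
      = ∫ x, mfun s w x ∂μ := by
    rw [← integral_finset_sum _ (fun i _ => hintm.indicator (measurableSet_cell s w i))]
    apply integral_congr_ae
    filter_upwards [ae_unique μ lam hint hlamSum wstar hmin w] with x hx
    obtain ⟨k, hk⟩ := exists_mem_cell s w x
    rw [Finset.sum_eq_single k]
    · exact Set.indicator_of_mem hk _
    · intro b _ hbk
      exact Set.indicator_of_notMem (fun hb => hbk (hx b k hb hk)) _
    · intro h; exact absurd (Finset.mem_univ k) h
  unfold Phi
  rw [Finset.sum_sub_distrib, Finset.sum_congr rfl (fun i _ => hterm i), hsum2]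
  congr 1
  rw [← Finset.sum_neg_distrib]
  exact Finset.sum_congr rfl fun i _ => by ring

lemma lam_le_up (lam : Fin n → ℝ) (hint : Integrable (fun x => ‖x‖) μ)
    (hlamSum : ∑ i, lam i = 1)
    (wstar : Fin n → ℝ) (hmin : ∀ w : Fin n → ℝ, Phi μ s lam wstar ≤ Phi μ s lam w)
    (i : Fin n) {t : ℝ} (ht : 0 < t) :
    lam i ≤ (μ (vorCell s (fun j => wstar j + if j = i then t else 0) i)).toReal := by
  set wt : Fin n → ℝ := fun j => wstar j + if j = i then t else 0 with hwt
  have h := hmin wt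
  rw [Phi_eq μ lam hint hlamSum wstar hmin wstar,
    Phi_eq μ lam hint hlamSum wstar hmin wt] at h
  have hsum : ∑ j, lam j * wt j = (∑ j, lam j * wstar j) + lam i * t := by
    have : ∀ j : Fin n, lam j * wt j = lam j * wstar j + (if j = i then lam j * t else 0) := by
      intro j; by_cases hj : j = i <;> simp [hwt, hj] <;> ring
    rw [Finset.sum_congr rfl fun j _ => this j, Finset.sum_add_distrib,
      Finset.sum_ite_eq' Finset.univ i (fun j => lam j * t)]
    simp
  have hptw : ∀ x, mfun s wstar x - mfun s wt x ≤ (vorCell s wt i).indicator (fun _ => t) x := by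
    intro x
    by_cases hx : x ∈ vorCell s wt i
    · rw [Set.indicator_of_mem hx]
      have hle : mfun s wstar x - t ≤ mfun s wt x := by
        refine le_mfun fun j => ?_
        have h1 := mfun_le (s := s) (w := wstar) (x := x) j
        by_cases hj : j = i
        · simp only [hwt, if_pos hj]; linarith
        · simp only [hwt, if_neg hj, add_zero]; linarith
      linarith
    · rw [Set.indicator_of_notMem hx]
      have hle : mfun s wstar x ≤ mfun s wt x := by
        refine le_mfun fun j => ?_
        by_cases hj : j = i
        · subst hj
          simp only [vorCell, Set.mem_setOf_eq, not_forall, not_le] at hx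
          obtain ⟨k, hk⟩ := hx
          have hki : k ≠ j := by rintro rfl; exact lt_irrefl _ hk
          simp only [hwt, if_neg hki, if_pos rfl, add_zero] at hk ⊢
          have := mfun_le (s := s) (w := wstar) (x := x) k
          linarith
        · simp only [hwt, if_neg hj, add_zero]
          have := mfun_le (s := s) (w := wstar) (x := x) j
          linarith
      linarith
  have hI : ∫ x, (mfun s wstar x - mfun s wt x) ∂μ ≤ (μ (vorCell s wt i)).toReal * t := by
    calc ∫ x, (mfun s wstar x - mfun s wt x) ∂μ
        ≤ ∫ x, (vorCell s wt i).indicator (fun _ => t) x ∂μ :=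
          integral_mono ((integrable_mfun μ hint).sub (integrable_mfun μ hint))
            ((integrable_const t).indicator (measurableSet_cell s wt i)) hptw
      _ = (μ (vorCell s wt i)).toReal * t := by
          rw [integral_indicator_const t (measurableSet_cell s wt i), smul_eq_mul, measureReal_def]
  rw [integral_sub (integrable_mfun μ hint) (integrable_mfun μ hint)] at hI
  rw [hsum] at h
  have : lam i * t ≤ (μ (vorCell s wt i)).toReal * t := by linarith
  exact le_of_mul_le_mul_right this ht

lemma down_le_lam (lam : Fin n → ℝ) (hint : Integrable (fun x => ‖x‖) μ)
    (hlamSum : ∑ i, lam i = 1)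
    (wstar : Fin n → ℝ) (hmin : ∀ w : Fin n → ℝ, Phi μ s lam wstar ≤ Phi μ s lam w)
    (i : Fin n) {t : ℝ} (ht : 0 < t) :
    (μ (vorCell s (fun j => wstar j + if j = i then -t else 0) i)).toReal ≤ lam i := by
  set wt : Fin n → ℝ := fun j => wstar j + if j = i then -t else 0 with hwt
  have h := hmin wt
  rw [Phi_eq μ lam hint hlamSum wstar hmin wstar,
    Phi_eq μ lam hint hlamSum wstar hmin wt] at h
  have hsum : ∑ j, lam j * wt j = (∑ j, lam j * wstar j) - lam i * t := by
    have : ∀ j : Fin n, lam j * wt j = lam j * wstar j + (if j = i then -(lam j * t) else 0) := by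
      intro j; by_cases hj : j = i <;> simp [hwt, hj] <;> ring
    rw [Finset.sum_congr rfl fun j _ => this j, Finset.sum_add_distrib,
      Finset.sum_ite_eq' Finset.univ i (fun j => -(lam j * t))]
    simp; ring
  have hptw : ∀ x, (vorCell s wt i).indicator (fun _ => t) x
      ≤ mfun s wt x - mfun s wstar x := by
    intro x
    by_cases hx : x ∈ vorCell s wt i
    · rw [Set.indicator_of_mem hx]
      have h1 : mfun s wt x = ‖x - s i‖ - wstar i + t := by
        rw [mfun_eq_of_mem hx, hwt]; simp; ring
      have h2 : x ∈ vorCell s wstar i := by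
        intro j
        have := hx j
        by_cases hj : j = i
        · subst hj; exact le_refl _
        · simp only [hwt, if_pos rfl, if_neg hj, if_true, add_zero] at this
          linarith
      rw [h1, mfun_eq_of_mem h2]
      linarith
    · rw [Set.indicator_of_notMem hx]
      have hle : mfun s wstar x ≤ mfun s wt x := by
        refine le_mfun fun j => ?_
        have := mfun_le (s := s) (w := wstar) (x := x) j
        by_cases hj : j = i
        · simp only [hwt, if_pos hj]; linarith
        · simp only [hwt, if_neg hj, add_zero]; linarith
      linarith
  have hI : (μ (vorCell s wt i)).toReal * t ≤ ∫ x, (mfun s wt x - mfun s wstar x) ∂μ := by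
    calc (μ (vorCell s wt i)).toReal * t
        = ∫ x, (vorCell s wt i).indicator (fun _ => t) x ∂μ := by
          rw [integral_indicator_const t (measurableSet_cell s wt i), smul_eq_mul, measureReal_def]
      _ ≤ ∫ x, (mfun s wt x - mfun s wstar x) ∂μ :=
          integral_mono ((integrable_const t).indicator (measurableSet_cell s wt i))
            ((integrable_mfun μ hint).sub (integrable_mfun μ hint)) hptw
  rw [integral_sub (integrable_mfun μ hint) (integrable_mfun μ hint)] at hI
  rw [hsum] at h
  have : (μ (vorCell s wt i)).toReal * t ≤ lam i * t := by linarith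
  exact le_of_mul_le_mul_right this ht

end VorAux

open VorAux in
/-- Any minimizer `w*` of `Φ` is adapted to `(μ, ν)`: `μ(Vor_S^{w*}(i)) = λ_i` for all `i`. -/
theorem phi_minimizer_adapted {d n : ℕ}
    (μ : Measure (EuclideanSpace ℝ (Fin d))) [IsProbabilityMeasure μ]
    (hac : μ ≪ volume)
    (hint : Integrable (fun x => ‖x‖) μ)
    (s : Fin n → EuclideanSpace ℝ (Fin d)) (hs : Function.Injective s)
    (lam : Fin n → ℝ) (hlam : ∀ i, 0 < lam i) (hlamSum : ∑ i, lam i = 1)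
    (wstar : Fin n → ℝ) (hmin : ∀ w : Fin n → ℝ, Phi μ s lam wstar ≤ Phi μ s lam w) :
    ∀ i : Fin n, μ (vorCell s wstar i) = ENNReal.ofReal (lam i) := by
  intro i
  haveI : Nonempty (Fin n) := ⟨i⟩
  -- Step 1 : lower bound
  set seq : ℕ → Set (EuclideanSpace ℝ (Fin d)) :=
    fun k => vorCell s (fun j => wstar j + if j = i then 1 / ((k : ℝ) + 1) else 0) i with hseq
  have hanti : Antitone seq := by
    intro k l hkl x hx j
    have hx' := hx j
    by_cases hj : j = i
    · subst hj; exact le_refl _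
    · simp only [if_neg hj, if_pos rfl, if_true, add_zero] at hx' ⊢
      have hle : 1 / ((l : ℝ) + 1) ≤ 1 / ((k : ℝ) + 1) := by
        apply one_div_le_one_div_of_le
        · positivity
        · have : (k : ℝ) ≤ (l : ℝ) := Nat.cast_le.mpr hkl
          linarith
      linarith
  have hiInter : ⋂ k, seq k = vorCell s wstar i := by
    ext x
    simp only [Set.mem_iInter]
    constructor
    · intro hx j
      by_cases hj : j = i
      · subst hj; exact le_refl _
      · by_contra hlt
        push_neg at hlt
        obtain ⟨k, hk⟩ := exists_nat_one_div_lt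
          (show (0:ℝ) < (‖x - s i‖ - wstar i) - (‖x - s j‖ - wstar j) by linarith)
        have := hx k j
        simp only [if_neg hj, if_pos rfl, if_true, add_zero] at this
        linarith
    · intro hx k j
      have := hx j
      by_cases hj : j = i
      · subst hj; exact le_refl _
      · simp only [if_neg hj, if_pos rfl, if_true, add_zero]
        have hpos : (0:ℝ) < 1 / ((k : ℝ) + 1) := by positivity
        linarith
  have hlim : Filter.Tendsto (μ ∘ seq) Filter.atTop (nhds (μ (vorCell s wstar i))) := by
    have := tendsto_measure_iInter_atTop (μ := μ)
      (fun k => (measurableSet_cell s _ i).nullMeasurableSet) hanti ⟨0, measure_ne_top μ _⟩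
    rwa [hiInter] at this
  have hge : ∀ k, ENNReal.ofReal (lam i) ≤ (μ ∘ seq) k := by
    intro k
    have hpos : (0:ℝ) < 1 / ((k : ℝ) + 1) := by positivity
    have := lam_le_up μ lam hint hlamSum wstar hmin i hpos
    calc ENNReal.ofReal (lam i) ≤ ENNReal.ofReal ((μ (seq k)).toReal) :=
          ENNReal.ofReal_le_ofReal this
      _ = μ (seq k) := ENNReal.ofReal_toReal (measure_ne_top μ _)
  have h1 : ENNReal.ofReal (lam i) ≤ μ (vorCell s wstar i) := ge_of_tendsto' hlim hge
  -- Step 2 : upper bound on strict cell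
  set U : Set (EuclideanSpace ℝ (Fin d)) :=
    {x | ∀ j, j ≠ i → ‖x - s i‖ - wstar i < ‖x - s j‖ - wstar j} with hU
  set seq' : ℕ → Set (EuclideanSpace ℝ (Fin d)) :=
    fun k => vorCell s (fun j => wstar j + if j = i then -(1 / ((k : ℝ) + 1)) else 0) i with hseq'
  have hmono : Monotone seq' := by
    intro k l hkl x hx j
    have hx' := hx j
    by_cases hj : j = i
    · subst hj; exact le_refl _
    · simp only [if_neg hj, if_pos rfl, if_true, add_zero] at hx' ⊢
      have hle : 1 / ((l : ℝ) + 1) ≤ 1 / ((k : ℝ) + 1) := by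
        apply one_div_le_one_div_of_le
        · positivity
        · have : (k : ℝ) ≤ (l : ℝ) := Nat.cast_le.mpr hkl
          linarith
      linarith
  have hiUnion : ⋃ k, seq' k = U := by
    ext x
    simp only [Set.mem_iUnion]
    constructor
    · rintro ⟨k, hk⟩ j hj
      have := hk j
      simp only [if_neg hj, if_pos rfl, if_true, add_zero] at this
      have hpos : (0:ℝ) < 1 / ((k : ℝ) + 1) := by positivity
      linarith
    · intro hx
      by_cases hall : ∀ j : Fin n, j = i
      · refine ⟨0, fun j => ?_⟩
        have := hall j; subst this; exact le_refl _
      · push_neg at hall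
        obtain ⟨j1, hj1⟩ := hall
        have hFne : (Finset.univ.filter (fun j : Fin n => j ≠ i)).Nonempty :=
          ⟨j1, Finset.mem_filter.mpr ⟨Finset.mem_univ _, hj1⟩⟩
        obtain ⟨j0, hj0F, hj0min⟩ := Finset.exists_min_image _
          (fun j => (‖x - s j‖ - wstar j) - (‖x - s i‖ - wstar i)) hFne
        have hj0i : j0 ≠ i := (Finset.mem_filter.mp hj0F).2
        have hε : (0:ℝ) < (‖x - s j0‖ - wstar j0) - (‖x - s i‖ - wstar i) := by
          have := hx j0 hj0i; linarith
        obtain ⟨k, hk⟩ := exists_nat_one_div_lt hε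
        refine ⟨k, fun j => ?_⟩
        by_cases hj : j = i
        · subst hj; exact le_refl _
        · simp only [if_neg hj, if_pos rfl, if_true, add_zero]
          have := hj0min j (Finset.mem_filter.mpr ⟨Finset.mem_univ _, hj⟩)
          linarith
  have hlim2 : Filter.Tendsto (μ ∘ seq') Filter.atTop (nhds (μ U)) := by
    have := tendsto_measure_iUnion_atTop (μ := μ) hmono
    rwa [hiUnion] at this
  have hle' : ∀ k, (μ ∘ seq') k ≤ ENNReal.ofReal (lam i) := by
    intro k
    have hpos : (0:ℝ) < 1 / ((k : ℝ) + 1) := by positivity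
    have := down_le_lam μ lam hint hlamSum wstar hmin i hpos
    calc (μ ∘ seq') k = ENNReal.ofReal ((μ (seq' k)).toReal) :=
          (ENNReal.ofReal_toReal (measure_ne_top μ _)).symm
      _ ≤ ENNReal.ofReal (lam i) := ENNReal.ofReal_le_ofReal this
  have h2 : μ U ≤ ENNReal.ofReal (lam i) := le_of_tendsto' hlim2 hle'
  -- Step 3 : the boundary is null
  have hdiffnull : μ (vorCell s wstar i \ U) = 0 := by
    have hsub : vorCell s wstar i \ U
        ⊆ ⋃ (j : Fin n) (_ : j ≠ i), (vorCell s wstar i ∩ vorCell s wstar j) := by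
      rintro x ⟨hxc, hxU⟩
      simp only [hU, Set.mem_setOf_eq, not_forall, not_lt] at hxU
      obtain ⟨j, hji, hjle⟩ := hxU
      refine Set.mem_iUnion.mpr ⟨j, Set.mem_iUnion.mpr ⟨hji, hxc, fun k => ?_⟩⟩
      have := hxc k
      have h3 := hxc j
      linarith
    refine measure_mono_null hsub (measure_iUnion_null fun j => ?_)
    rcases eq_or_ne j i with h | h
    · simp [h]
    · simpa [h] using inter_null μ lam hint hlamSum wstar hmin wstar (Ne.symm h)
  -- assemble
  refine le_antisymm ?_ h1
  have hsub2 : vorCell s wstar i ⊆ U ∪ (vorCell s wstar i \ U) := by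
    intro x hx
    by_cases hxU : x ∈ U
    · exact Or.inl hxU
    · exact Or.inr ⟨hx, hxU⟩
  calc μ (vorCell s wstar i) ≤ μ (U ∪ (vorCell s wstar i \ U)) := measure_mono hsub2
    _ ≤ μ U + μ (vorCell s wstar i \ U) := measure_union_le _ _
    _ = μ U := by rw [hdiffnull, add_zero]
    _ ≤ ENNReal.ofReal (lam i) := h2

end
end
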